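/- Let u : ℝ_{≥0} → ℝ_{≥0} be such that φ(s) := s·u(s) is nondecreasing, let x_1,…,x_n ∈ ℂ^N span ℂ^N with u positive where needed, and define h_j(q) = (1/N) x_j* ((1/n) Σ_i u(q_i) x_i x_i*)^{-1} x_j. Then h is scalable: for every α > 1 and every j, α h_j(q_1,…,q_n) ≥ h_j(α q_1,…,α q_n). -/

import Mathlib

open Matrix
open scoped ComplexOrder

lemma sum_mulVec' {m k : Type*} [Fintype k] {ι : Type*} (s : Finset ι)
    (M : ι → Matrix m k ℂ) (v : k → ℂ) :
    (∑ i ∈ s, M i) *ᵥ v = ∑ i ∈ s, (M i) *ᵥ v := by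
  ext j
  simp only [Matrix.mulVec, dotProduct, Finset.sum_apply, Matrix.sum_apply,
    Finset.sum_mul]
  rw [Finset.sum_comm]

lemma vecMulVec_mulVec' {m k : Type*} [Fintype k] (a : m → ℂ) (b v : k → ℂ) :
    Matrix.vecMulVec a b *ᵥ v = (b ⬝ᵥ v) • a := by
  ext j
  simp only [Matrix.mulVec, Matrix.vecMulVec_apply, dotProduct, Pi.smul_apply,
    smul_eq_mul, Finset.sum_mul, mul_comm, mul_assoc]
  rw [Finset.mul_sum]
  exact Finset.sum_congr rfl fun i _ => by ring

lemma dotProduct_sum'' {k : Type*} [Fintype k] {ι : Type*} (s : Finset ι)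
    (v : k → ℂ) (w : ι → k → ℂ) :
    v ⬝ᵥ (∑ i ∈ s, w i) = ∑ i ∈ s, v ⬝ᵥ w i := by
  simp only [dotProduct, Finset.sum_apply, Finset.mul_sum]
  rw [Finset.sum_comm]

lemma quad_eval {N n : ℕ} (x : Fin n → Fin N → ℂ) (c : Fin n → ℝ) (v : Fin N → ℂ) :
    star v ⬝ᵥ ((1 / (n : ℂ)) • ∑ i, (c i : ℂ) • Matrix.vecMulVec (x i) (star (x i))) *ᵥ v
      = (((1 / (n : ℝ)) * ∑ i, c i * Complex.normSq (star v ⬝ᵥ x i) : ℝ) : ℂ) := by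
  rw [Matrix.smul_mulVec, sum_mulVec']
  simp only [Matrix.smul_mulVec, vecMulVec_mulVec']
  rw [dotProduct_smul]
  push_cast
  rw [dotProduct_sum'' Finset.univ (star v)]
  simp only [smul_eq_mul, Finset.mul_sum]
  refine Finset.sum_congr rfl fun i _ => ?_
  rw [dotProduct_smul, dotProduct_smul]
  have h1 : star (x i) ⬝ᵥ v = star (star v ⬝ᵥ x i) := by
    exact Matrix.star_dotProduct _ _
  have h2 : ((Complex.normSq (star v ⬝ᵥ x i) : ℝ) : ℂ)
      = (star v ⬝ᵥ x i) * star (star v ⬝ᵥ x i) := by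
    rw [← Complex.mul_conj]; rfl
  rw [h1, h2]
  simp only [smul_eq_mul]
  ring

lemma aux_inv {N : ℕ} {A B : Matrix (Fin N) (Fin N) ℂ} (hA : A.PosDef) (hB : B.PosDef)
    {α : ℝ} (hα : 0 < α)
    (hle : ∀ v : Fin N → ℂ, (star v ⬝ᵥ A *ᵥ v).re ≤ α * (star v ⬝ᵥ B *ᵥ v).re)
    (x : Fin N → ℂ) :
    (star x ⬝ᵥ B⁻¹ *ᵥ x).re ≤ α * (star x ⬝ᵥ A⁻¹ *ᵥ x).re := by
  classical
  set y := B⁻¹ *ᵥ x with hy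
  set z := A⁻¹ *ᵥ x with hz
  have hBy : B *ᵥ y = x := by
    rw [hy, Matrix.mulVec_mulVec, Matrix.mul_nonsing_inv _ hB.det_pos.ne'.isUnit,
      Matrix.one_mulVec]
  have hAz : A *ᵥ z = x := by
    rw [hz, Matrix.mulVec_mulVec, Matrix.mul_nonsing_inv _ hA.det_pos.ne'.isUnit,
      Matrix.one_mulVec]
  have hAh : Aᴴ = A := hA.isHermitian
  set a : ℝ := (star x ⬝ᵥ y).re with ha
  set b : ℝ := (star x ⬝ᵥ z).re with hb
  set t : ℝ := (star y ⬝ᵥ A *ᵥ y).re with ht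
  have hyx : (star y ⬝ᵥ x).re = a := by
    rw [ha, Matrix.star_dotProduct (v := x) (w := y)]
    simp [Complex.star_def]
  have h1 : t ≤ α * a := by
    have := hle y
    rw [hBy, hyx] at this
    exact this
  -- positive semidefiniteness at w = α⁻¹ • y - z
  set c : ℂ := ((α⁻¹ : ℝ) : ℂ) with hc
  set w : Fin N → ℂ := c • y - z with hw
  have hzAy : star z ⬝ᵥ A *ᵥ y = star (star y ⬝ᵥ x) := by
    rw [Matrix.star_dotProduct, Matrix.star_mulVec, hAh, ← Matrix.dotProduct_mulVec, hAz]
  have hzx : star z ⬝ᵥ x = star (star x ⬝ᵥ z) := by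
    rw [Matrix.star_dotProduct]
  have hE : star w ⬝ᵥ A *ᵥ w
      = c * (c * (star y ⬝ᵥ A *ᵥ y)) - c * (star y ⬝ᵥ x) - c * star (star y ⬝ᵥ x)
        + star (star x ⬝ᵥ z) := by
    rw [hw]
    have hstar : star (c • y - z) = c • star y - star z := by
      simp [star_sub, star_smul, hc]
    rw [hstar, Matrix.mulVec_sub, Matrix.mulVec_smul, hAz]
    simp only [sub_dotProduct, dotProduct_sub, smul_dotProduct,
      dotProduct_smul, smul_eq_mul, hzAy, hzx]
    ring
  have hpos : 0 ≤ (star w ⬝ᵥ A *ᵥ w).re := by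
    have h0 := hA.posSemidef.dotProduct_mulVec_nonneg w
    exact (Complex.le_def.mp h0).1
  rw [hE] at hpos
  -- compute real part of the expansion
  have hexp : (c * (c * (star y ⬝ᵥ A *ᵥ y)) - c * (star y ⬝ᵥ x) - c * star (star y ⬝ᵥ x)
        + star (star x ⬝ᵥ z)).re = α⁻¹ * (α⁻¹ * t) - α⁻¹ * a - α⁻¹ * a + b := by
    simp only [Complex.add_re, Complex.sub_re, hc, Complex.re_ofReal_mul, ht,
      Complex.star_def, Complex.conj_re, hyx, hb]
  rw [hexp] at hpos
  have hα' : 0 < α⁻¹ := inv_pos.mpr hα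
  have h2 : α⁻¹ * α = 1 := inv_mul_cancel₀ hα.ne'
  have h3 : α⁻¹ * (α⁻¹ * t) ≤ α⁻¹ * (α⁻¹ * (α * a)) := by
    have := mul_le_mul_of_nonneg_left h1 hα'.le
    exact mul_le_mul_of_nonneg_left this hα'.le
  have h4 : α⁻¹ * (α⁻¹ * (α * a)) = α⁻¹ * a := by
    field_simp
  have h5 : α⁻¹ * a ≤ b := by nlinarith
  nlinarith

theorem stmt_11 {N n : ℕ} (hN : 0 < N) (hn : 0 < n)
    (u : ℝ → ℝ) (hphi : ∀ s t, 0 ≤ s → s ≤ t → s * u s ≤ t * u t)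
    (x : Fin n → Fin N → ℂ)
    (Z : (Fin n → ℝ) → Matrix (Fin N) (Fin N) ℂ)
    (hZdef : ∀ q, Z q = (1 / (n : ℂ)) • ∑ i, (u (q i) : ℂ) • Matrix.vecMulVec (x i) (star (x i)))
    (hZpos : ∀ q : Fin n → ℝ, (∀ i, 0 ≤ q i) → (Z q).PosDef)
    (h : (Fin n → ℝ) → Fin n → ℝ)
    (hhdef : ∀ q j, h q j = (1 / (N : ℝ)) * (star (x j) ⬝ᵥ (Z q)⁻¹.mulVec (x j)).re)
    (q : Fin n → ℝ) (hq : ∀ i, 0 ≤ q i) (α : ℝ) (hα : 1 < α) :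
    ∀ j, h (fun i => α * q i) j ≤ α * h q j := by
  intro j
  have hα0 : (0:ℝ) < α := lt_trans one_pos hα
  have hquad : ∀ (q' : Fin n → ℝ) (v : Fin N → ℂ),
      star v ⬝ᵥ (Z q') *ᵥ v
        = (((1/(n:ℝ)) * ∑ i, u (q' i) * Complex.normSq (star v ⬝ᵥ x i) : ℝ) : ℂ) := by
    intro q' v
    rw [hZdef]
    exact quad_eval x (fun i => u (q' i)) v
  -- u 0 > 0
  have hu0 : 0 < u 0 := by
    have hpd := hZpos (fun _ => 0) (fun _ => le_refl 0)
    set v : Fin N → ℂ := fun _ => 1 with hv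
    have hvne : v ≠ 0 := by
      intro h0
      have := congrFun h0 ⟨0, hN⟩
      simp [hv] at this
    have hlt := hpd.dotProduct_mulVec_pos hvne
    rw [hquad] at hlt
    have hlt' : 0 < (1/(n:ℝ)) * ∑ i, u 0 * Complex.normSq (star v ⬝ᵥ x i) :=
      Complex.zero_lt_real.mp hlt
    have hS : 0 ≤ ∑ i : Fin n, Complex.normSq (star v ⬝ᵥ x i) :=
      Finset.sum_nonneg fun i _ => Complex.normSq_nonneg _
    rw [← Finset.mul_sum] at hlt'
    by_contra hneg
    push_neg at hneg
    have hnR : (0:ℝ) < n := by exact_mod_cast hn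
    have hm : u 0 * ∑ i : Fin n, Complex.normSq (star v ⬝ᵥ x i) ≤ 0 :=
      mul_nonpos_of_nonpos_of_nonneg hneg hS
    nlinarith [hm, one_div_pos.mpr hnR]
  have hu : ∀ i, u (q i) ≤ α * u (α * q i) := by
    intro i
    rcases (hq i).lt_or_eq with hqi | hqi
    · have hle' : q i ≤ α * q i := by nlinarith
      have h := hphi (q i) (α * q i) (hq i) hle'
      nlinarith
    · rw [← hqi, mul_zero]
      nlinarith
  have hA := hZpos q hq
  have hB := hZpos (fun i => α * q i) (fun i => by show (0:ℝ) ≤ α * q i; exact mul_nonneg hα0.le (hq i))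
  have hle : ∀ v : Fin N → ℂ,
      (star v ⬝ᵥ (Z q) *ᵥ v).re ≤ α * (star v ⬝ᵥ (Z (fun i => α * q i)) *ᵥ v).re := by
    intro v
    rw [hquad, hquad]
    simp only [Complex.ofReal_re]
    have hterm : ∀ i, u (q i) * Complex.normSq (star v ⬝ᵥ x i)
        ≤ α * (u (α * q i) * Complex.normSq (star v ⬝ᵥ x i)) := by
      intro i
      have := Complex.normSq_nonneg (star v ⬝ᵥ x i)
      nlinarith [hu i]
    have hsum := Finset.sum_le_sum (fun i (_ : i ∈ Finset.univ) => hterm i)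
    rw [← Finset.mul_sum] at hsum
    have h1n : (0:ℝ) ≤ 1/(n:ℝ) := by positivity
    nlinarith [mul_le_mul_of_nonneg_left hsum h1n]
  have hkey := aux_inv hA hB hα0 hle (x j)
  rw [hhdef, hhdef]
  have h1N : (0:ℝ) ≤ 1/(N:ℝ) := by positivity
  nlinarith [mul_le_mul_of_nonneg_left hkey h1N]
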